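/- Let G be a D-regular Bonnet-Myers sharp graph of diameter L, x_0 a pole, and y a vertex with d(x_0, y) = k. Then 2d⁺(y) + d⁰(y) = 2D(1 − k/L) and 2d⁻(y) + d⁰(y) = 2kD/L. -/

import Mathlib

open Finset

namespace BMS

open scoped Classical

variable {V : Type*}

/-- The uniform probability measure on the closed 1-ball of `x` in a `D`-regular graph. -/
noncomputable def mu (G : SimpleGraph V) (D : ℕ) (x : V) : V → ℝ :=
  fun v => if G.dist x v ≤ 1 then 1 / (D + 1) else 0

/-- The L¹-Wasserstein distance between `μ_x` and `μ_y`, as an infimum over transport plans. -/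
noncomputable def W1 (G : SimpleGraph V) [Fintype V] (D : ℕ) (x y : V) : ℝ :=
  sInf { c : ℝ | ∃ π : V → V → ℝ,
    (∀ u v, 0 ≤ π u v) ∧
    (∀ u, ∑ v, π u v = mu G D x u) ∧
    (∀ v, ∑ u, π u v = mu G D y v) ∧
    c = ∑ u, ∑ v, (G.dist u v : ℝ) * π u v }

/-- Ollivier Ricci curvature (Lin–Lu–Yau normalization for regular graphs). -/
noncomputable def kappa (G : SimpleGraph V) [Fintype V] (D : ℕ) (x y : V) : ℝ :=
  ((D + 1) / D) * (1 - W1 G D x y)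

/-- `G` is Bonnet–Myers sharp: the infimum of the curvature over edges equals `2 / L`. -/
def BMSharp (G : SimpleGraph V) [Fintype V] (D L : ℕ) : Prop :=
  sInf { k : ℝ | ∃ x y, G.Adj x y ∧ k = kappa G D x y } = 2 / (L : ℝ)

/-- Number of neighbors of `y` at distance `k` from `x0`. -/
noncomputable def sphDeg (G : SimpleGraph V) [Fintype V] (x0 y : V) (k : ℕ) : ℕ :=
  (Finset.univ.filter (fun v => G.Adj y v ∧ G.dist x0 v = k)).card

/-- Number of triangles containing the edge `x ~ y` (common neighbors of `x` and `y`). -/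
noncomputable def tri (G : SimpleGraph V) [Fintype V] (x y : V) : ℕ :=
  (Finset.univ.filter (fun v => G.Adj x v ∧ G.Adj y v)).card

/-- A good optimal transport map from `B_1(a)` to `B_1(b)`: a bijection between the 1-balls,
fixing exactly the vertices of `B_1(a) ∩ B_1(b)` (among the domain), whose cost realizes
the Wasserstein distance `W1 (μ_a, μ_b)`. -/
def goodMap (G : SimpleGraph V) [Fintype V] (D : ℕ) (a b : V) (T : V → V) : Prop :=
  Set.BijOn T {v | G.dist a v ≤ 1} {v | G.dist b v ≤ 1} ∧
  (∀ v, G.dist a v ≤ 1 → (T v = v ↔ G.dist b v ≤ 1)) ∧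
  (1 / (D + 1 : ℝ)) *
      ∑ v ∈ Finset.univ.filter (fun v => G.dist a v ≤ 1), (G.dist v (T v) : ℝ) =
    W1 G D a b

section Aux

variable [Fintype V] {G : SimpleGraph V} {D L : ℕ}

/-- The closed 1-ball as a finset. -/
noncomputable def ball (G : SimpleGraph V) [Fintype V] (x : V) : Finset V :=
  Finset.univ.filter (fun v => G.dist x v ≤ 1)

lemma mem_ball_iff (hconn : G.Connected) {x v : V} :
    v ∈ ball G x ↔ x = v ∨ G.Adj x v := by
  simp only [ball, Finset.mem_filter, Finset.mem_univ, true_and,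
    Nat.le_one_iff_eq_zero_or_eq_one, hconn.dist_eq_zero_iff,
    SimpleGraph.dist_eq_one_iff_adj]

lemma ball_eq (hconn : G.Connected) (x : V) :
    ball G x = insert x (G.neighborFinset x) := by
  ext v
  rw [mem_ball_iff hconn, Finset.mem_insert, SimpleGraph.mem_neighborFinset]
  exact or_congr_left eq_comm

lemma card_ball (hconn : G.Connected) (hreg : G.IsRegularOfDegree D) (x : V) :
    (ball G x).card = D + 1 := by
  rw [ball_eq hconn, Finset.card_insert_of_notMem (by simp), SimpleGraph.card_neighborFinset_eq_degree,
    hreg x]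

lemma mu_nonneg (x v : V) : 0 ≤ mu G D x v := by
  unfold mu; split <;> positivity

lemma sum_weighted_mu (hconn : G.Connected) (f : V → ℝ) (x : V) :
    ∑ v, f v * mu G D x v = (∑ v ∈ ball G x, f v) / ((D : ℝ) + 1) := by
  unfold mu
  simp_rw [mul_ite, mul_zero, mul_one_div]
  rw [← Finset.sum_filter, ← Finset.sum_div]
  rfl

lemma sum_mu (hconn : G.Connected) (hreg : G.IsRegularOfDegree D) (x : V) :
    ∑ v, mu G D x v = 1 := by
  have h := sum_weighted_mu (D := D) hconn (fun _ => (1 : ℝ)) x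
  simp only [one_mul] at h
  rw [h, Finset.sum_const, card_ball hconn hreg, nsmul_eq_mul]
  have : ((D : ℝ) + 1) ≠ 0 := by positivity
  push_cast
  field_simp

def plans (G : SimpleGraph V) [Fintype V] (D : ℕ) (x y : V) : Set ℝ :=
  { c : ℝ | ∃ π : V → V → ℝ,
    (∀ u v, 0 ≤ π u v) ∧
    (∀ u, ∑ v, π u v = mu G D x u) ∧
    (∀ v, ∑ u, π u v = mu G D y v) ∧
    c = ∑ u, ∑ v, (G.dist u v : ℝ) * π u v }

lemma W1_eq_sInf_plans (x y : V) : W1 G D x y = sInf (plans G D x y) := rfl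

lemma prod_mem_plans (hconn : G.Connected) (hreg : G.IsRegularOfDegree D) (x y : V) :
    (∑ u, ∑ v, (G.dist u v : ℝ) * (mu G D x u * mu G D y v)) ∈ plans G D x y := by
  refine ⟨fun u v => mu G D x u * mu G D y v,
    fun u v => mul_nonneg (mu_nonneg x u) (mu_nonneg y v),
    fun u => ?_, fun v => ?_, rfl⟩
  · rw [← Finset.mul_sum, sum_mu hconn hreg, mul_one]
  · rw [← Finset.sum_mul, sum_mu hconn hreg, one_mul]

lemma plans_nonneg {x y : V} {c : ℝ} (hc : c ∈ plans G D x y) : 0 ≤ c := by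
  obtain ⟨π, hpos, -, -, rfl⟩ := hc
  refine Finset.sum_nonneg fun u _ => Finset.sum_nonneg fun v _ => ?_
  exact mul_nonneg (Nat.cast_nonneg _) (hpos u v)

lemma bddBelow_plans (x y : V) : BddBelow (plans G D x y) :=
  ⟨0, fun _ hc => plans_nonneg hc⟩

/-- Kantorovich duality, easy direction. -/
lemma kant (hconn : G.Connected) (hreg : G.IsRegularOfDegree D) (f : V → ℝ)
    (hf : ∀ u v, f v - f u ≤ (G.dist u v : ℝ)) (x y : V) :
    (∑ v ∈ ball G y, f v) / ((D : ℝ) + 1) - (∑ v ∈ ball G x, f v) / ((D : ℝ) + 1)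
      ≤ W1 G D x y := by
  rw [W1_eq_sInf_plans]
  refine le_csInf ⟨_, prod_mem_plans hconn hreg x y⟩ ?_
  rintro c ⟨π, hpos, hx, hy, rfl⟩
  have expand : (∑ v ∈ ball G y, f v) / ((D : ℝ) + 1) - (∑ v ∈ ball G x, f v) / ((D : ℝ) + 1)
      = ∑ u, ∑ v, (f v - f u) * π u v := by
    rw [← sum_weighted_mu hconn f y, ← sum_weighted_mu hconn f x]
    simp_rw [sub_mul, Finset.sum_sub_distrib]
    congr 1
    · rw [Finset.sum_comm]
      refine Finset.sum_congr rfl fun v _ => ?_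
      rw [← Finset.mul_sum, hy v]
    · refine Finset.sum_congr rfl fun u _ => ?_
      rw [← Finset.mul_sum, hx u]
  rw [expand]
  refine Finset.sum_le_sum fun u _ => Finset.sum_le_sum fun v _ => ?_
  exact mul_le_mul_of_nonneg_right (hf u v) (hpos u v)

lemma W1_le_three (hconn : G.Connected) (hreg : G.IsRegularOfDegree D) {x y : V}
    (hxy : G.Adj x y) : W1 G D x y ≤ 3 := by
  rw [W1_eq_sInf_plans]
  have h1 : sInf (plans G D x y) ≤ _ := csInf_le (bddBelow_plans x y) (prod_mem_plans hconn hreg x y)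
  refine h1.trans ?_
  have hbound : ∀ u v : V, (G.dist u v : ℝ) * (mu G D x u * mu G D y v)
      ≤ 3 * (mu G D x u * mu G D y v) := by
    intro u v
    by_cases hu : G.dist x u ≤ 1
    · by_cases hv : G.dist y v ≤ 1
      · refine mul_le_mul_of_nonneg_right ?_ (mul_nonneg (mu_nonneg x u) (mu_nonneg y v))
        have hd : G.dist u v ≤ 3 := by
          have t1 : G.dist u v ≤ G.dist u x + G.dist x v := hconn.dist_triangle
          have t2 : G.dist x v ≤ G.dist x y + G.dist y v := hconn.dist_triangle
          have h3 : G.dist x y = 1 := SimpleGraph.dist_eq_one_iff_adj.mpr hxy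
          have h4 : G.dist u x = G.dist x u := SimpleGraph.dist_comm
          omega
        exact_mod_cast Nat.cast_le.mpr hd
      · simp [mu, hv]
    · simp [mu, hu]
  calc ∑ u, ∑ v, (G.dist u v : ℝ) * (mu G D x u * mu G D y v)
      ≤ ∑ u, ∑ v, 3 * (mu G D x u * mu G D y v) :=
        Finset.sum_le_sum fun u _ => Finset.sum_le_sum fun v _ => hbound u v
    _ = 3 * ((∑ u, mu G D x u) * (∑ v, mu G D y v)) := by
        rw [Finset.sum_mul_sum, Finset.mul_sum]
        exact Finset.sum_congr rfl fun u _ => by rw [Finset.mul_sum]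
    _ = 3 := by rw [sum_mu hconn hreg, sum_mu hconn hreg]; norm_num

lemma W1_edge_le (hconn : G.Connected) (hreg : G.IsRegularOfDegree D) (hD : 0 < D)
    (hL : 0 < L) (hBM : BMSharp G D L) {x y : V} (hxy : G.Adj x y) :
    W1 G D x y ≤ 1 - 2 * (D : ℝ) / (((D : ℝ) + 1) * L) := by
  have hkap : 2 / (L : ℝ) ≤ kappa G D x y := by
    rw [← hBM]
    refine csInf_le ⟨((D : ℝ) + 1) / D * (1 - 3), ?_⟩ ⟨x, y, hxy, rfl⟩
    rintro c ⟨a, b, hab, rfl⟩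
    unfold kappa
    refine mul_le_mul_of_nonneg_left ?_ (by positivity)
    linarith [W1_le_three hconn hreg hab]
  unfold kappa at hkap
  have hD' : (0 : ℝ) < D := by exact_mod_cast hD
  have hL' : (0 : ℝ) < L := by exact_mod_cast hL
  have h2 : 2 / (L : ℝ) * ((D : ℝ) / ((D : ℝ) + 1))
      ≤ (1 - W1 G D x y) := by
    have := mul_le_mul_of_nonneg_right hkap (show (0:ℝ) ≤ (D : ℝ) / ((D : ℝ) + 1) by positivity)
    calc 2 / (L : ℝ) * ((D : ℝ) / ((D : ℝ) + 1)) ≤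
        ((D : ℝ) + 1) / D * (1 - W1 G D x y) * ((D : ℝ) / ((D : ℝ) + 1)) := this
      _ = 1 - W1 G D x y := by field_simp
  have h3 : 2 / (L : ℝ) * ((D : ℝ) / ((D : ℝ) + 1)) = 2 * (D : ℝ) / (((D : ℝ) + 1) * L) := by
    field_simp
  linarith [h3 ▸ h2]

/-- The key potential: `ψ(y) = Σ_{v∈B(y)} d(x0,v) − (D+1)d(x0,y)`, i.e. `d⁺(y) − d⁻(y)`. -/
noncomputable def psi (G : SimpleGraph V) [Fintype V] (D : ℕ) (x0 y : V) : ℝ :=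
  (∑ v ∈ ball G y, (G.dist x0 v : ℝ)) - ((D : ℝ) + 1) * (G.dist x0 y)

lemma key_step (hconn : G.Connected) (hreg : G.IsRegularOfDegree D) (hD : 0 < D)
    (hL : 0 < L) (hBM : BMSharp G D L) (x0 : V) {x y : V} (hxy : G.Adj x y)
    (hstep : G.dist x0 y = G.dist x0 x + 1) :
    psi G D x0 y ≤ psi G D x0 x - 2 * (D : ℝ) / L := by
  have hD1 : (0 : ℝ) < (D : ℝ) + 1 := by positivity
  have hL' : (0 : ℝ) < L := by exact_mod_cast hL
  have hf : ∀ u v : V, ((G.dist x0 v : ℝ)) - (G.dist x0 u : ℝ) ≤ (G.dist u v : ℝ) := by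
    intro u v
    have := hconn.dist_triangle (u := x0) (v := u) (w := v)
    have h2 : (G.dist x0 v : ℝ) ≤ (G.dist x0 u : ℝ) + (G.dist u v : ℝ) := by exact_mod_cast this
    linarith
  have hk := kant hconn hreg (fun v => (G.dist x0 v : ℝ)) hf x y
  have hw := W1_edge_le hconn hreg hD hL hBM hxy
  have hmul : (∑ v ∈ ball G y, (G.dist x0 v : ℝ)) - (∑ v ∈ ball G x, (G.dist x0 v : ℝ))
      ≤ ((D : ℝ) + 1) * (1 - 2 * (D : ℝ) / (((D : ℝ) + 1) * L)) := by
    have h := (hk.trans hw)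
    have := mul_le_mul_of_nonneg_left h (le_of_lt hD1)
    calc (∑ v ∈ ball G y, (G.dist x0 v : ℝ)) - (∑ v ∈ ball G x, (G.dist x0 v : ℝ))
        = ((D : ℝ) + 1) * ((∑ v ∈ ball G y, (G.dist x0 v : ℝ)) / ((D : ℝ) + 1)
            - (∑ v ∈ ball G x, (G.dist x0 v : ℝ)) / ((D : ℝ) + 1)) := by
          field_simp
      _ ≤ _ := this
  have hexp : ((D : ℝ) + 1) * (1 - 2 * (D : ℝ) / (((D : ℝ) + 1) * L))
      = ((D : ℝ) + 1) - 2 * (D : ℝ) / L := by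
    field_simp
  have hcast : (G.dist x0 y : ℝ) = (G.dist x0 x : ℝ) + 1 := by exact_mod_cast hstep
  unfold psi
  rw [hcast]
  linarith [hexp ▸ hmul]

lemma exists_pred (hconn : G.Connected) {x0 y : V} {n : ℕ} (h : G.dist x0 y = n + 1) :
    ∃ z, G.Adj z y ∧ G.dist x0 z = n := by
  have hne : y ≠ x0 := by
    intro he; rw [he, SimpleGraph.dist_self] at h; omega
  obtain ⟨w, hw⟩ := (hconn y x0).exists_walk_length_eq_dist
  obtain ⟨z, hadj, q, rfl⟩ := SimpleGraph.Walk.exists_eq_cons_of_ne hne w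
  have hlen : q.length = n := by
    have : G.dist y x0 = n + 1 := by rw [SimpleGraph.dist_comm]; exact h
    rw [this] at hw
    simpa using hw
  have h1 : G.dist x0 z ≤ n := by
    have := SimpleGraph.dist_le q.reverse
    simpa [hlen] using this
  have h2 : n ≤ G.dist x0 z := by
    have ht := hconn.dist_triangle (u := x0) (v := z) (w := y)
    have hzy : G.dist z y = 1 := SimpleGraph.dist_eq_one_iff_adj.mpr hadj.symm
    omega
  exact ⟨z, hadj.symm, le_antisymm h1 h2⟩

lemma psi_base (hconn : G.Connected) (hreg : G.IsRegularOfDegree D) (x0 : V) :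
    psi G D x0 x0 = D := by
  unfold psi
  rw [SimpleGraph.dist_self, ball_eq hconn, Finset.sum_insert (by simp)]
  rw [SimpleGraph.dist_self]
  have : ∀ v ∈ G.neighborFinset x0, ((G.dist x0 v : ℝ)) = 1 := by
    intro v hv
    rw [SimpleGraph.mem_neighborFinset] at hv
    exact_mod_cast SimpleGraph.dist_eq_one_iff_adj.mpr hv
  rw [Finset.sum_congr rfl this, Finset.sum_const, SimpleGraph.card_neighborFinset_eq_degree,
    hreg x0]
  push_cast
  ring

lemma psi_le (hconn : G.Connected) (hreg : G.IsRegularOfDegree D) (hD : 0 < D)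
    (hL : 0 < L) (hBM : BMSharp G D L) (x0 : V) :
    ∀ (n : ℕ) (y : V), G.dist x0 y = n → psi G D x0 y ≤ D - 2 * (D : ℝ) / L * n := by
  intro n
  induction n with
  | zero =>
    intro y hy
    have : x0 = y := hconn.dist_eq_zero_iff.mp hy
    subst this
    rw [psi_base hconn hreg]
    simp
  | succ n ih =>
    intro y hy
    obtain ⟨z, hadj, hz⟩ := exists_pred hconn hy
    have h1 := key_step hconn hreg hD hL hBM x0 hadj (by omega)
    have h2 := ih z hz
    push_cast
    push_cast at h2
    linarith

lemma sum_psi (hconn : G.Connected) (hreg : G.IsRegularOfDegree D) (x0 : V) :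
    ∑ y, psi G D x0 y = 0 := by
  have hpsi : ∀ y : V, psi G D x0 y
      = ∑ v, (if G.dist y v ≤ 1 then ((G.dist x0 v : ℝ) - (G.dist x0 y : ℝ)) else 0) := by
    intro y
    rw [← Finset.sum_filter]
    have : (Finset.univ.filter (fun v => G.dist y v ≤ 1)) = ball G y := rfl
    rw [this, Finset.sum_sub_distrib, Finset.sum_const, card_ball hconn hreg, nsmul_eq_mul]
    unfold psi
    push_cast
    ring
  simp_rw [hpsi]
  have hanti : ∀ y v : V, (if G.dist y v ≤ 1 then ((G.dist x0 v : ℝ) - (G.dist x0 y : ℝ)) else 0)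
      = -(if G.dist v y ≤ 1 then ((G.dist x0 y : ℝ) - (G.dist x0 v : ℝ)) else 0) := by
    intro y v
    rw [SimpleGraph.dist_comm (u := v) (v := y)]
    split <;> ring
  have h := Finset.sum_comm (s := (Finset.univ : Finset V)) (t := (Finset.univ : Finset V))
    (f := fun y v => (if G.dist y v ≤ 1 then ((G.dist x0 v : ℝ) - (G.dist x0 y : ℝ)) else 0))
  set T := ∑ y, ∑ v, (if G.dist y v ≤ 1 then ((G.dist x0 v : ℝ) - (G.dist x0 y : ℝ)) else 0) with hT
  have hneg : T = -T := by
    calc T = ∑ y, ∑ x, (if G.dist x y ≤ 1 then ((G.dist x0 y : ℝ) - (G.dist x0 x : ℝ)) else 0) := h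
      _ = ∑ y, ∑ x, -(if G.dist y x ≤ 1 then ((G.dist x0 x : ℝ) - (G.dist x0 y : ℝ)) else 0) :=
          Finset.sum_congr rfl fun y _ => Finset.sum_congr rfl fun x _ => hanti x y
      _ = -T := by simp_rw [Finset.sum_neg_distrib]; rw [hT]
  linarith

lemma psi_eq (hconn : G.Connected) (hreg : G.IsRegularOfDegree D) (hD : 0 < D)
    (hL : 0 < L) (hBM : BMSharp G D L) (x0 p : V) (hp : G.dist x0 p = L) (y : V) :
    psi G D x0 y = D - 2 * (D : ℝ) / L * (G.dist x0 y) := by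
  have hL' : (0 : ℝ) < L := by exact_mod_cast hL
  have hD' : (0 : ℝ) < D := by exact_mod_cast hD
  set c : ℝ := 2 * (D : ℝ) / L with hc
  have hc0 : 0 < c := by positivity
  set N : ℝ := (Fintype.card V : ℝ) with hN
  have expand : ∀ q : V, ∑ z, ((D : ℝ) - c * (G.dist q z) - psi G D q z)
      = N * D - c * (∑ z, (G.dist q z : ℝ)) := by
    intro q
    rw [Finset.sum_sub_distrib, Finset.sum_sub_distrib, sum_psi hconn hreg q,
      Finset.sum_const, ← Finset.mul_sum, Finset.card_univ, nsmul_eq_mul, hN]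
    ring
  have e1 : 0 ≤ N * D - c * (∑ z, (G.dist x0 z : ℝ)) := by
    rw [← expand x0]
    exact Finset.sum_nonneg fun z _ => by
      linarith [psi_le hconn hreg hD hL hBM x0 (G.dist x0 z) z rfl]
  have e2 : 0 ≤ N * D - c * (∑ z, (G.dist p z : ℝ)) := by
    rw [← expand p]
    exact Finset.sum_nonneg fun z _ => by
      linarith [psi_le hconn hreg hD hL hBM p (G.dist p z) z rfl]
  have e3 : N * L ≤ (∑ z, (G.dist x0 z : ℝ)) + (∑ z, (G.dist p z : ℝ)) := by
    rw [← Finset.sum_add_distrib]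
    calc N * L = ∑ _z : V, (L : ℝ) := by
          rw [Finset.sum_const, Finset.card_univ, nsmul_eq_mul, hN]
      _ ≤ _ := Finset.sum_le_sum fun z _ => by
          have ht := hconn.dist_triangle (u := x0) (v := z) (w := p)
          have hcm : G.dist z p = G.dist p z := SimpleGraph.dist_comm
          rw [← hp]
          push_cast
          rw [hcm] at ht
          exact_mod_cast ht
  have hcL : c * (L : ℝ) = 2 * D := by
    rw [hc]; field_simp
  have e4 : c * (N * (L : ℝ)) = 2 * D * N := by
    rw [show c * (N * (L : ℝ)) = (c * L) * N by ring, hcL]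
  have e5 := mul_le_mul_of_nonneg_left e3 (le_of_lt hc0)
  rw [mul_add] at e5
  have hkey : c * (∑ z, (G.dist x0 z : ℝ)) = N * D := by
    nlinarith [e1, e2, e4, e5]
  have hzero : ∑ z, ((D : ℝ) - c * (G.dist x0 z) - psi G D x0 z) = 0 := by
    rw [expand x0, hkey]; ring
  have hterm := (Finset.sum_eq_zero_iff_of_nonneg (fun z _ => by
    linarith [psi_le hconn hreg hD hL hBM x0 (G.dist x0 z) z rfl])).mp hzero y (Finset.mem_univ y)
  linarith [hterm]

end Aux

theorem stmt [Fintype V] (G : SimpleGraph V) (hconn : G.Connected)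
    (D L : ℕ) (hD : 0 < D) (hL : 0 < L) (hreg : G.IsRegularOfDegree D)
    (hdiam : G.diam = L) (hBM : BMSharp G D L)
    (x0 : V) (hpole : ∃ p, G.dist x0 p = L)
    (y : V) (k : ℕ) (hk : G.dist x0 y = k) :
    2 * (sphDeg G x0 y (k + 1) : ℝ) + (sphDeg G x0 y k : ℝ) = 2 * D * (1 - k / L) ∧
    2 * (sphDeg G x0 y (k - 1) : ℝ) + (sphDeg G x0 y k : ℝ) = 2 * k * D / L := by
  obtain ⟨p, hp⟩ := hpole
  have hL' : (0 : ℝ) < L := by exact_mod_cast hL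
  rcases Nat.eq_zero_or_pos k with hk0 | hkpos
  · subst hk0
    have hyx : x0 = y := hconn.dist_eq_zero_iff.mp hk
    subst hyx
    have h1 : sphDeg G x0 x0 1 = D := by
      unfold sphDeg
      have heq : (Finset.univ.filter (fun v => G.Adj x0 v ∧ G.dist x0 v = 1))
          = G.neighborFinset x0 := by
        ext v
        simp [SimpleGraph.mem_neighborFinset, SimpleGraph.dist_eq_one_iff_adj]
      rw [heq, SimpleGraph.card_neighborFinset_eq_degree, hreg x0]
    have h0 : sphDeg G x0 x0 0 = 0 := by
      unfold sphDeg
      rw [Finset.card_eq_zero, Finset.filter_eq_empty_iff]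
      rintro v - ⟨ha, hd⟩
      have : x0 = v := hconn.dist_eq_zero_iff.mp hd
      subst this
      exact G.irrefl ha
    norm_num [h1, h0]
  · obtain ⟨m, rfl⟩ : ∃ m, k = m + 1 := ⟨k - 1, by omega⟩
    have hpsiy := psi_eq hconn hreg hD hL hBM x0 p hp y
    rw [hk] at hpsiy
    have htri : ∀ v, G.Adj y v →
        (G.dist x0 v = m ∨ G.dist x0 v = m + 1 ∨ G.dist x0 v = m + 2) := by
      intro v hv
      have h1 : G.dist x0 v ≤ G.dist x0 y + G.dist y v := hconn.dist_triangle
      have h2 : G.dist x0 y ≤ G.dist x0 v + G.dist v y := hconn.dist_triangle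
      have hyv : G.dist y v = 1 := SimpleGraph.dist_eq_one_iff_adj.mpr hv
      have hvy : G.dist v y = 1 := SimpleGraph.dist_eq_one_iff_adj.mpr hv.symm
      omega
    set t1 := Finset.univ.filter (fun v => G.Adj y v ∧ G.dist x0 v = m) with ht1
    set t2 := Finset.univ.filter (fun v => G.Adj y v ∧ G.dist x0 v = m + 1) with ht2
    set t3 := Finset.univ.filter (fun v => G.Adj y v ∧ G.dist x0 v = m + 2) with ht3
    have hn1 : sphDeg G x0 y m = t1.card := rfl
    have hn2 : sphDeg G x0 y (m + 1) = t2.card := rfl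
    have hn3 : sphDeg G x0 y (m + 2) = t3.card := rfl
    have hsplit : G.neighborFinset y = t1 ∪ t2 ∪ t3 := by
      ext v
      simp only [ht1, ht2, ht3, Finset.mem_union, Finset.mem_filter, Finset.mem_univ, true_and,
        SimpleGraph.mem_neighborFinset]
      constructor
      · intro hv
        rcases htri v hv with h | h | h <;> tauto
      · tauto
    have d12 : Disjoint t1 t2 := by
      rw [Finset.disjoint_left]
      intro v h1 h2
      simp only [ht1, ht2, Finset.mem_filter] at h1 h2
      omega
    have d123 : Disjoint (t1 ∪ t2) t3 := by
      rw [Finset.disjoint_left]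
      intro v h1 h2
      simp only [ht1, ht2, ht3, Finset.mem_union, Finset.mem_filter] at h1 h2
      omega
    have hcard : t1.card + t2.card + t3.card = D := by
      have : (t1 ∪ t2 ∪ t3).card = t1.card + t2.card + t3.card := by
        rw [Finset.card_union_of_disjoint d123, Finset.card_union_of_disjoint d12]
      rw [← this, ← hsplit, SimpleGraph.card_neighborFinset_eq_degree, hreg y]
    have hsum : ∑ v ∈ G.neighborFinset y, (G.dist x0 v : ℝ)
        = (m : ℝ) * t1.card + ((m : ℝ) + 1) * t2.card + ((m : ℝ) + 2) * t3.card := by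
      rw [hsplit, Finset.sum_union d123, Finset.sum_union d12]
      have e1 : ∑ v ∈ t1, (G.dist x0 v : ℝ) = (m : ℝ) * t1.card := by
        rw [Finset.sum_congr rfl (fun v hv => ?_), Finset.sum_const, nsmul_eq_mul, mul_comm]
        simp only [ht1, Finset.mem_filter] at hv
        exact_mod_cast congrArg (Nat.cast : ℕ → ℝ) hv.2.2
      have e2 : ∑ v ∈ t2, (G.dist x0 v : ℝ) = ((m : ℝ) + 1) * t2.card := by
        rw [Finset.sum_congr rfl (fun v hv => ?_), Finset.sum_const, nsmul_eq_mul, mul_comm]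
        simp only [ht2, Finset.mem_filter] at hv
        push_cast [hv.2.2]
        norm_num
      have e3 : ∑ v ∈ t3, (G.dist x0 v : ℝ) = ((m : ℝ) + 2) * t3.card := by
        rw [Finset.sum_congr rfl (fun v hv => ?_), Finset.sum_const, nsmul_eq_mul, mul_comm]
        simp only [ht3, Finset.mem_filter] at hv
        push_cast [hv.2.2]
        norm_num
      rw [e1, e2, e3]
    have hpsival : psi G D x0 y = (t3.card : ℝ) - t1.card := by
      unfold psi
      rw [ball_eq hconn, Finset.sum_insert (by simp), hsum, hk]
      have hDc : ((t1.card : ℝ) + t2.card + t3.card) = D := by exact_mod_cast hcard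
      push_cast
      nlinarith [hDc]
    have hD_eq : (t1.card : ℝ) + t2.card + t3.card = D := by exact_mod_cast hcard
    have hP : (t3.card : ℝ) - t1.card = D - 2 * D / L * (m + 1) := by
      rw [← hpsival, hpsiy]
      push_cast
      ring
    rw [show m + 1 - 1 = m by omega, show m + 1 + 1 = m + 2 from rfl,
      hn1, hn2, hn3]
    have hkc : ((m + 1 : ℕ) : ℝ) = (m : ℝ) + 1 := by push_cast; ring
    have hm1 : (m + 1) - 1 = m := by omega
    constructor
    · show 2 * ((t3.card : ℕ) : ℝ) + (t2.card : ℝ) = 2 * D * (1 - ((m + 1 : ℕ) : ℝ) / L)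
      rw [hkc]
      have hgoal : 2 * (D : ℝ) * (1 - ((m : ℝ) + 1) / L) = 2 * D - 2 * D / L * ((m : ℝ) + 1) := by
        field_simp
      rw [hgoal]
      linarith [hP, hD_eq]
    · show 2 * (t1.card : ℝ) + (t2.card : ℝ) = 2 * ((m + 1 : ℕ) : ℝ) * D / L
      rw [hkc]
      have hgoal : 2 * ((m : ℝ) + 1) * (D : ℝ) / L = 2 * D - (2 * D - 2 * D / L * ((m : ℝ) + 1)) := by
        field_simp
        ring
      rw [hgoal]
      linarith [hP, hD_eq]

end BMS
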